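/- arXiv:1009.0696 — 3 statements merged into one kernel-verified Lean document; each statement's English description precedes it below -/
import Mathlib

section
/- Let g = R ⋉ n be a semidirect product Lie algebra over a field 𝕂 of characteristic 0, where n is an ideal. Define i : C^q(n,n)^R → C^q(g,g) by i(f)|_{n^q} = f and i(f)(x₁,…,x_q) = 0 whenever some argument lies in R (relative to the decomposition g = R ⊕ n). Then for all R-invariant cochains f and h on n with values in n, one has i([f,h]) = [i(f), i(h)] for the Nijenhuis–Richardson bracket, and i(d_{φ₀} f) = d_{φ} i(f), where φ₀ is the bracket of n and φ is the bracket of g. -/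
/-! Statement 5: the extension-by-zero map `i : C(n,n)^R → C(g,g)` for a semidirect product
`g = R ⋉ n` commutes with the Nijenhuis–Richardson bracket and with the Chevalley–Eilenberg
differentials. -/

open scoped BigOperators

section Defs

variable {𝕂 L : Type*} [Field 𝕂] [LieRing L] [LieAlgebra 𝕂 L]

/-- Pair term of the Chevalley–Eilenberg differential (raw version). -/
def pairArgR {L : Type*} [LieRing L] :
    ∀ {k : ℕ}, ((Fin k → L) → L) → (Fin (k + 1) → L) → Fin (k + 1) → Fin (k + 1) → L
  | 0, _, _, _, _ => 0
  | (k + 1), f, x, i, j =>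
    if h : (i : ℕ) < (j : ℕ) then
      f (Fin.cons ⁅x i, x j⁆
        (fun l => x (j.succAbove
          ((⟨(i : ℕ), by have := j.isLt; omega⟩ : Fin (k + 1)).succAbove l))))
    else 0

/-- The Chevalley–Eilenberg differential with adjoint coefficients (raw version). -/
def ceD {L : Type*} [LieRing L] {k : ℕ} (f : (Fin k → L) → L) : (Fin (k + 1) → L) → L :=
  fun x =>
    (∑ i : Fin (k + 1), ((-1 : ℤ) ^ (i : ℕ)) • ⁅x i, f (x ∘ i.succAbove)⁆)
      + ∑ j : Fin (k + 1), ∑ i ∈ Finset.Iio j,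
          ((-1 : ℤ) ^ ((i : ℕ) + (j : ℕ))) • pairArgR f x i j

/-- The Nijenhuis–Richardson insertion product `f • h` of a `(p+1)`-cochain and a
`(q+1)`-cochain (symmetrized form, valid in characteristic zero on alternating maps). -/
noncomputable def nrComp (𝕂 : Type*) {L : Type*} [Field 𝕂] [LieRing L] [LieAlgebra 𝕂 L]
    (p q : ℕ) (f : (Fin (p + 1) → L) → L) (h : (Fin (q + 1) → L) → L) :
    (Fin (p + q + 1) → L) → L := fun x =>
  ((p.factorial * (q + 1).factorial : ℕ) : 𝕂)⁻¹ •
    ∑ σ : Equiv.Perm (Fin (p + q + 1)),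
      ((Equiv.Perm.sign σ : ℤ)) •
        f (Fin.cons
            (h (fun i : Fin (q + 1) => x (σ (Fin.cast (by omega) (Fin.castAdd p i)))))
            (fun i : Fin p => x (σ (Fin.cast (by omega) (Fin.natAdd (q + 1) i)))))

/-- The Nijenhuis–Richardson graded bracket `[f, h] = f•h − (−1)^{pq} h•f`. -/
noncomputable def nrBr (𝕂 : Type*) {L : Type*} [Field 𝕂] [LieRing L] [LieAlgebra 𝕂 L]
    (p q : ℕ) (f : (Fin (p + 1) → L) → L) (h : (Fin (q + 1) → L) → L) :
    (Fin (p + q + 1) → L) → L := fun x =>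
  nrComp 𝕂 p q f h x -
    ((-1 : ℤ) ^ (p * q)) • nrComp 𝕂 q p h f (fun i => x (Fin.cast (by omega) i))

end Defs

/-- Extension by zero `i(F)` of a cochain `F` on `n` to a cochain on `g`, via the projection
`π : g → n` along `R`. -/
def iFunR {𝕂 g : Type*} [Field 𝕂] [LieRing g] [LieAlgebra 𝕂 g]
    (n : LieSubalgebra 𝕂 g) (π : g →ₗ[𝕂] n) {k : ℕ}
    (F : (Fin k → n) → n) : (Fin k → g) → g := fun x => (F (fun j => π (x j)) : g)

/-- `R`-invariance of a cochain on `n`. -/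
def RInvt {𝕂 g : Type*} [Field 𝕂] [LieRing g] [LieAlgebra 𝕂 g]
    (R n : LieSubalgebra 𝕂 g) (hid : ∀ x : g, ∀ y ∈ n, ⁅x, y⁆ ∈ n) {k : ℕ}
    (f : AlternatingMap 𝕂 n n (Fin k)) : Prop :=
  ∀ r ∈ R, ∀ x : Fin k → n,
    ⁅r, (f x : g)⁆ =
      ∑ i : Fin k, (f (Function.update x i ⟨⁅r, (x i : g)⁆, hid r (x i) (x i).2⟩) : g)

section helpers
private lemma comp_cons {α β : Type*} {k : ℕ} (P : α → β) (a : α) (v : Fin k → α) :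
    (fun m : Fin (k+1) => P ((Fin.cons a v : Fin (k+1) → α) m))
      = Fin.cons (P a) (fun m => P (v m)) := by
  funext m
  refine Fin.cases ?_ (fun s => ?_) m <;> simp

private lemma sa_val {m : ℕ} (pp : Fin (m+1)) (i : Fin m) :
    ((pp.succAbove i : Fin (m+1)) : ℕ) = if (i:ℕ) < (pp:ℕ) then (i:ℕ) else (i:ℕ)+1 := by
  rcases Nat.lt_or_ge (i:ℕ) (pp:ℕ) with hlt | hge
  · rw [Fin.succAbove_of_castSucc_lt _ _ (by simpa [Fin.lt_def] using hlt), if_pos hlt]; rfl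
  · rw [Fin.succAbove_of_le_castSucc _ _ (by simpa [Fin.le_def] using hge),
      if_neg (by omega)]; rfl

private def cmplN (a b m : ℕ) : ℕ :=
  if m < min a b then m else if m + 1 < max a b then m + 1 else m + 2

private def cmpl {p : ℕ} (i j : Fin (p+2)) (m : Fin p) : Fin (p+2) :=
  ⟨cmplN i j m, by have := m.isLt; unfold cmplN; split_ifs <;> omega⟩

private lemma cmpl_comm {p : ℕ} (i j : Fin (p+2)) (m : Fin p) : cmpl i j m = cmpl j i m := by
  apply Fin.ext
  simp [cmpl, cmplN, min_comm, max_comm]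

private lemma cmpl_eq_double {p : ℕ} (i : Fin (p+2)) (l : Fin (p+1)) (m : Fin p) :
    i.succAbove (l.succAbove m) = cmpl i (i.succAbove l) m := by
  apply Fin.ext
  show _ = cmplN _ _ _
  simp only [sa_val, cmplN]
  split_ifs <;> omega

private lemma cmpl_eq_pair {p : ℕ} (i j : Fin (p+2)) (hij : (i:ℕ) < (j:ℕ)) (hi : (i:ℕ) < p+1)
    (m : Fin p) :
    j.succAbove ((⟨(i:ℕ), hi⟩ : Fin (p+1)).succAbove m) = cmpl i j m := by
  apply Fin.ext
  show _ = cmplN _ _ _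
  simp only [sa_val, cmplN]
  split_ifs <;> omega

private lemma map_update_eq {𝕂 M : Type*} [Field 𝕂] [AddCommGroup M] [Module 𝕂 M] {p : ℕ}
    (f : AlternatingMap 𝕂 M M (Fin (p+1))) (v : Fin (p+1) → M) (l : Fin (p+1)) (z : M) :
    f (Function.update v l z) = ((-1:ℤ)^(l:ℕ)) • f (Fin.cons z (v ∘ l.succAbove)) := by
  have hcomp : Fin.cons z (v ∘ l.succAbove) = (Function.update v l z) ∘ ⇑(l.cycleRange⁻¹) := by
    funext j
    refine Fin.cases ?_ (fun m => ?_) j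
    · have h0 : (l.cycleRange⁻¹) 0 = l := by
        rw [Equiv.Perm.inv_def, Equiv.symm_apply_eq, Fin.cycleRange_self]
      rw [Fin.cons_zero, Function.comp_apply, h0, Function.update_self]
    · have h1 : (l.cycleRange⁻¹) m.succ = l.succAbove m := by
        rw [Equiv.Perm.inv_def, Equiv.symm_apply_eq, Fin.cycleRange_succAbove]
      rw [Fin.cons_succ]
      show v (l.succAbove m) = Function.update v l z (l.cycleRange⁻¹ m.succ)
      rw [h1, Function.update_of_ne (Fin.succAbove_ne l m)]
  have hinv : ((-1 : ℤˣ) ^ (l:ℕ))⁻¹ = (-1 : ℤˣ) ^ (l:ℕ) := by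
    rw [← inv_pow]
    norm_num
  rw [hcomp, AlternatingMap.map_perm, map_inv, Fin.sign_cycleRange, hinv, Units.smul_def,
    Units.val_pow_eq_pow_val, smul_smul]
  norm_num [← mul_pow]

private lemma map_cons_add {𝕂 M : Type*} [Field 𝕂] [AddCommGroup M] [Module 𝕂 M] {p : ℕ}
    (f : AlternatingMap 𝕂 M M (Fin (p+1))) (a b : M) (v : Fin p → M) :
    f (Fin.cons (a + b) v) = f (Fin.cons a v) + f (Fin.cons b v) := by
  have := f.toMultilinearMap.cons_add v a b
  simpa using this

private lemma map_cons_neg {𝕂 M : Type*} [Field 𝕂] [AddCommGroup M] [Module 𝕂 M] {p : ℕ}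
    (f : AlternatingMap 𝕂 M M (Fin (p+1))) (a : M) (v : Fin p → M) :
    f (Fin.cons (-a) v) = - f (Fin.cons a v) := by
  have := f.toMultilinearMap.cons_smul v (-1 : 𝕂) a
  simpa using this

private lemma sum_Iio_swap {M : Type*} [AddCommMonoid M] {k : ℕ} (f : Fin k → Fin k → M) :
    ∑ j, ∑ i ∈ Finset.Iio j, f i j = ∑ i, ∑ j ∈ Finset.Ioi i, f i j := by
  rw [Finset.sum_sigma', Finset.sum_sigma']
  exact Finset.sum_nbij' (fun x => ⟨x.2, x.1⟩) (fun x => ⟨x.2, x.1⟩)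
    (by simp) (by simp) (by simp) (by simp) (fun _ _ => rfl)

private lemma sum_split_offdiag {M : Type*} [AddCommGroup M] {k : ℕ} (E : Fin k → Fin k → M)
    (hE : ∀ i, E i i = 0) :
    ∑ i, ∑ j, E i j = ∑ i, ∑ j ∈ Finset.Ioi i, (E i j + E j i) := by
  have h1 : ∀ i, ∑ j, E i j = ∑ j ∈ Finset.Ioi i, E i j + ∑ j ∈ Finset.Iio i, E i j := by
    intro i
    rw [← Finset.sum_disjUnion, Finset.Ioi_disjUnion_Iio,
      ← Finset.sum_compl_add_sum {i} (E i), Finset.sum_singleton, hE, add_zero]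
    exact Finset.disjoint_left.2 fun a h1 h2 =>
      absurd ((Finset.mem_Ioi.1 h1).trans (Finset.mem_Iio.1 h2)) (lt_irrefl _)
  simp only [h1, Finset.sum_add_distrib]
  congr 1
  rw [show (∑ i, ∑ j ∈ Finset.Iio i, E i j) = ∑ j, ∑ i ∈ Finset.Iio j, (fun a b => E b a) i j
    from rfl, sum_Iio_swap]
end helpers

private lemma key_nrComp {𝕂 g : Type*} [Field 𝕂] [LieRing g] [LieAlgebra 𝕂 g]
    (n : LieSubalgebra 𝕂 g) (π : g →ₗ[𝕂] n) (hπn : ∀ y : n, π (y : g) = y)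
    (a b : ℕ) (F : (Fin (a+1) → n) → n) (H : (Fin (b+1) → n) → n) (x : Fin (a+b+1) → g) :
    nrComp 𝕂 a b (iFunR n π F) (iFunR n π H) x = iFunR n π (nrComp 𝕂 a b F H) x := by
  unfold nrComp iFunR
  rw [Submodule.coe_smul_of_tower, AddSubmonoidClass.coe_finset_sum]
  congr 1
  refine Finset.sum_congr rfl fun σ _ => ?_
  have hz : ∀ (z : ℤ) (w : n), ((z • w : n) : g) = z • (w : g) := fun z w => rfl
  rw [hz]
  simp only [comp_cons, hπn]

private lemma part1 {𝕂 g : Type*} [Field 𝕂] [LieRing g] [LieAlgebra 𝕂 g]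
    (n : LieSubalgebra 𝕂 g) (π : g →ₗ[𝕂] n) (hπn : ∀ y : n, π (y : g) = y)
    (p q : ℕ) (F : (Fin (p+1) → n) → n) (H : (Fin (q+1) → n) → n) (x : Fin (p+q+1) → g) :
    nrBr 𝕂 p q (iFunR n π F) (iFunR n π H) x = iFunR n π (nrBr 𝕂 p q F H) x := by
  unfold nrBr
  rw [key_nrComp n π hπn p q F H x,
    key_nrComp n π hπn q p H F (fun i => x (Fin.cast (by omega) i))]
  unfold iFunR
  norm_cast


private lemma part2 {𝕂 g : Type*} [Field 𝕂] [LieRing g] [LieAlgebra 𝕂 g]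
    (R n : LieSubalgebra 𝕂 g)
    (hid : ∀ x : g, ∀ y ∈ n, ⁅x, y⁆ ∈ n)
    (π : g →ₗ[𝕂] n)
    (hπn : ∀ y : n, π (y : g) = y)
    (hπR : ∀ r ∈ R, π r = 0)
    (hsub : ∀ z : g, z - (π z : g) ∈ R)
    (p : ℕ)
    (f : AlternatingMap 𝕂 n n (Fin (p + 1)))
    (hf : RInvt R n hid f)
    (x : Fin (p + 2) → g) :
    ceD (iFunR n π ⇑f) x = iFunR n π (ceD ⇑f) x := by
  classical
  set y : Fin (p+2) → n := fun k => π (x k) with hy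
  set r : Fin (p+2) → g := fun k => x k - (y k : g) with hrdef
  have hrR : ∀ k, r k ∈ R := fun k => hsub (x k)
  have hx : ∀ k, x k = r k + (y k : g) := fun k => (sub_add_cancel _ _).symm
  have hz : ∀ (z : ℤ) (w : n), ((z • w : n) : g) = z • (w : g) := fun _ _ => rfl
  have hcadd : ∀ (A B : n), ((A + B : n) : g) = (A : g) + (B : g) := fun _ _ => rfl
  set z1 : Fin (p+2) → Fin (p+2) → n :=
    fun i j => ⟨⁅r i, (y j : g)⁆, hid (r i) (y j : g) (y j).2⟩ with hz1
  set E : Fin (p+2) → Fin (p+2) → g := fun i j =>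
    if i = j then 0 else
      (((-1:ℤ)^((i:ℕ)+(j:ℕ))) * (if (i:ℕ) < (j:ℕ) then -1 else 1)) •
        ((f (Fin.cons (z1 i j) (fun m => y (cmpl i j m))) : n) : g) with hE
  have hEdiag : ∀ i, E i i = 0 := fun i => by simp [hE]
  -- the sign computation
  have hsgn : ∀ (i : Fin (p+2)) (l : Fin (p+1)),
      ((-1:ℤ)^(i:ℕ)) * ((-1:ℤ)^(l:ℕ))
        = ((-1:ℤ)^((i:ℕ)+((i.succAbove l : Fin (p+2)):ℕ)))
            * (if (i:ℕ) < ((i.succAbove l : Fin (p+2)):ℕ) then -1 else 1) := by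
    intro i l
    rw [sa_val]
    rcases Nat.lt_or_ge (l:ℕ) (i:ℕ) with h | h
    · rw [if_pos h, if_neg (by omega), pow_add, mul_one]
    · rw [if_neg (by omega), if_pos (by omega), pow_add, pow_succ]; ring
  -- step 1 : the invariance expansion of the r-bracket terms
  have hstep1 : ∀ i : Fin (p+2),
      ((-1:ℤ)^(i:ℕ)) • ⁅r i, ((f (y ∘ i.succAbove)) : g)⁆ = ∑ jj, E i jj := by
    intro i
    rw [Fin.sum_univ_succAbove (fun jj => E i jj) i, hEdiag, zero_add,
      hf (r i) (hrR i) (y ∘ i.succAbove), Finset.smul_sum]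
    refine Finset.sum_congr rfl fun l _ => ?_
    rw [map_update_eq f (y ∘ i.succAbove) l _, hz, smul_smul, hsgn i l]
    show _ = E i (i.succAbove l)
    rw [hE]
    simp only
    rw [if_neg (Fin.succAbove_ne i l).symm]
    congr 1
    refine congrArg (fun t => ((f t : n) : g)) ?_
    funext mm
    refine Fin.cases ?_ (fun m => ?_) mm
    · rw [Fin.cons_zero, Fin.cons_zero]
      rfl
    · rw [Fin.cons_succ, Fin.cons_succ]
      show y (i.succAbove (l.succAbove m)) = y (cmpl i (i.succAbove l) m)
      exact congrArg y (cmpl_eq_double i l m)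
  -- step A1 : first sums
  have hA1 : (∑ i : Fin (p+2), ((-1:ℤ)^(i:ℕ)) • ⁅x i, ((f (y ∘ i.succAbove)) : g)⁆)
      = (∑ i : Fin (p+2), ((-1:ℤ)^(i:ℕ)) • ⁅(y i : g), ((f (y ∘ i.succAbove)) : g)⁆)
        + ∑ i : Fin (p+2), ∑ j : Fin (p+2), E i j := by
    rw [← Finset.sum_add_distrib]
    refine Finset.sum_congr rfl fun i _ => ?_
    rw [hx i, add_lie, smul_add, hstep1 i, add_comm]
  have hcneg : ∀ (A : n), ((-A : n) : g) = -(A : g) := fun _ => rfl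
  -- pair terms
  have hpair : ∀ (j i : Fin (p+2)), (i:ℕ) < (j:ℕ) →
      ((-1:ℤ)^((i:ℕ)+(j:ℕ))) • pairArgR (iFunR n π ⇑f) x i j
        = (-(E i j + E j i))
          + ((-1:ℤ)^((i:ℕ)+(j:ℕ))) • ((f (Fin.cons ⁅y i, y j⁆ (fun m => y (cmpl i j m)))) : g) := by
    intro j i hij
    have hπbr : π ⁅x i, x j⁆ = z1 i j + (-(z1 j i)) + ⁅y i, y j⁆ := by
      have hbr : ⁅x i, x j⁆
          = ⁅r i, r j⁆ + (((z1 i j : n) : g) + ((-(z1 j i) : n) : g) + ((⁅y i, y j⁆ : n) : g)) := by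
        have c1 : ((z1 i j : n) : g) = ⁅r i, (y j : g)⁆ := rfl
        have c2 : ((-(z1 j i) : n) : g) = -⁅r j, (y i : g)⁆ := rfl
        have c3 : ((⁅y i, y j⁆ : n) : g) = ⁅(y i : g), (y j : g)⁆ := rfl
        rw [c1, c2, c3, lie_skew]
        rw [hx i, hx j, add_lie, lie_add, lie_add]
        abel
      rw [hbr, map_add, map_add, map_add, hπR _ (R.lie_mem (hrR i) (hrR j)),
        hπn, hπn, hπn, zero_add]
    have hpA : pairArgR (iFunR n π ⇑f) x i j
        = ((f (Fin.cons (π ⁅x i, x j⁆) (fun m => y (cmpl i j m)))) : g) := by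
      simp only [pairArgR]
      rw [dif_pos hij]
      refine congrArg (fun t => ((f t : n) : g)) ?_
      funext mm
      refine Fin.cases ?_ (fun m => ?_) mm
      · rfl
      · exact congrArg (fun t => π (x t)) (cmpl_eq_pair i j hij (by have := j.isLt; omega) m)
    have hwji : (fun m => y (cmpl j i m)) = (fun m => y (cmpl i j m)) :=
      funext fun m => congrArg y (cmpl_comm j i m)
    rw [hpA, hπbr, map_cons_add f _ _ _, map_cons_add f _ _ _, map_cons_neg f _ _,
      hcadd, hcadd, hcneg]
    have hEij : E i j = (((-1:ℤ)^((i:ℕ)+(j:ℕ))) * (-1))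
        • ((f (Fin.cons (z1 i j) (fun m => y (cmpl i j m)))) : g) := by
      rw [hE]
      simp only
      rw [if_neg (Fin.ne_of_val_ne (Nat.ne_of_lt hij)), if_pos hij]
    have hEji : E j i = (((-1:ℤ)^((i:ℕ)+(j:ℕ))))
        • ((f (Fin.cons (z1 j i) (fun m => y (cmpl i j m)))) : g) := by
      rw [hE]
      simp only
      rw [if_neg (Fin.ne_of_val_ne (Nat.ne_of_lt hij).symm), if_neg (by omega), hwji,
        Nat.add_comm (j:ℕ) (i:ℕ), mul_one]
    rw [hEij, hEji]
    module
  -- pair sums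
  have hA2 : (∑ j : Fin (p+2), ∑ i ∈ Finset.Iio j, ((-1:ℤ)^((i:ℕ)+(j:ℕ))) • pairArgR (iFunR n π ⇑f) x i j)
      = (∑ j : Fin (p+2), ∑ i ∈ Finset.Iio j, (-(E i j + E j i)))
        + ∑ j : Fin (p+2), ∑ i ∈ Finset.Iio j,
            ((-1:ℤ)^((i:ℕ)+(j:ℕ))) • ((f (Fin.cons ⁅y i, y j⁆ (fun m => y (cmpl i j m)))) : g) := by
    rw [← Finset.sum_add_distrib]
    refine Finset.sum_congr rfl fun j _ => ?_
    rw [← Finset.sum_add_distrib]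
    refine Finset.sum_congr rfl fun i hi => ?_
    have hlt : i < j := Finset.mem_Iio.mp hi
    exact hpair j i hlt
  have hcancel : (∑ i : Fin (p+2), ∑ j : Fin (p+2), E i j) + (∑ j : Fin (p+2), ∑ i ∈ Finset.Iio j, (-(E i j + E j i))) = 0 := by
    rw [sum_split_offdiag E hEdiag,
      show (∑ j : Fin (p+2), ∑ i ∈ Finset.Iio j, (-(E i j + E j i)))
          = ∑ j : Fin (p+2), ∑ i ∈ Finset.Iio j, (fun a b => -(E a b + E b a)) i j from rfl,
      sum_Iio_swap, ← Finset.sum_add_distrib]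
    refine Finset.sum_eq_zero fun i _ => ?_
    rw [← Finset.sum_add_distrib]
    exact Finset.sum_eq_zero fun j _ => by abel
  have hLHS : ceD (iFunR n π ⇑f) x
      = (∑ i : Fin (p+2), ((-1:ℤ)^(i:ℕ)) • ⁅x i, ((f (y ∘ i.succAbove)) : g)⁆)
        + ∑ j : Fin (p+2), ∑ i ∈ Finset.Iio j,
            ((-1:ℤ)^((i:ℕ)+(j:ℕ))) • pairArgR (iFunR n π ⇑f) x i j := rfl
  have hceD : ceD (⇑f) y = (∑ i : Fin (p+2), ((-1:ℤ)^(i:ℕ)) • ⁅y i, f (y ∘ i.succAbove)⁆)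
      + ∑ j : Fin (p+2), ∑ i ∈ Finset.Iio j, ((-1:ℤ)^((i:ℕ)+(j:ℕ))) • pairArgR ⇑f y i j := rfl
  have hRHS : iFunR n π (ceD ⇑f) x
      = (∑ i : Fin (p+2), ((-1:ℤ)^(i:ℕ)) • ⁅(y i : g), ((f (y ∘ i.succAbove)) : g)⁆)
        + ∑ j : Fin (p+2), ∑ i ∈ Finset.Iio j,
            ((-1:ℤ)^((i:ℕ)+(j:ℕ))) • ((f (Fin.cons ⁅y i, y j⁆ (fun m => y (cmpl i j m)))) : g) := by
    show ((ceD (⇑f) y : n) : g) = _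
    rw [hceD, hcadd, AddSubmonoidClass.coe_finset_sum, AddSubmonoidClass.coe_finset_sum]
    congr 1
    refine Finset.sum_congr rfl fun j _ => ?_
    rw [AddSubmonoidClass.coe_finset_sum]
    refine Finset.sum_congr rfl fun i hi => ?_
    have hlt' : i < j := Finset.mem_Iio.mp hi
    have hij : (i:ℕ) < (j:ℕ) := hlt' 
    rw [hz]
    congr 1
    simp only [pairArgR]
    rw [dif_pos hij]
    refine congrArg (fun t => ((f t : n) : g)) ?_
    funext mm
    refine Fin.cases ?_ (fun m => ?_) mm
    · rfl
    · exact congrArg y (cmpl_eq_pair i j hij (by have := j.isLt; omega) m)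
  rw [hLHS, hA1, hA2, hRHS]
  rw [add_assoc, ← add_assoc (∑ i : Fin (p+2), ∑ j : Fin (p+2), E i j), hcancel, zero_add]


/-- For a semidirect product `g = R ⋉ n` (with `n` an ideal, `R` a complement
and `π : g → n` the projection along `R`), the extension-by-zero map `i` on `R`-invariant
cochains commutes with the Nijenhuis–Richardson bracket and with the Chevalley–Eilenberg
differentials: `i([f,h]) = [i(f), i(h)]` and `i(d_{φ₀} f) = d_φ i(f)`. -/
theorem iMap_commutes_with_NR_bracket_and_differential
    {𝕂 g : Type*} [Field 𝕂] [CharZero 𝕂] [LieRing g] [LieAlgebra 𝕂 g]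
    (R n : LieSubalgebra 𝕂 g)
    (hid : ∀ x : g, ∀ y ∈ n, ⁅x, y⁆ ∈ n)
    (hcompl : IsCompl R.toSubmodule n.toSubmodule)
    (π : g →ₗ[𝕂] n)
    (hπn : ∀ y : n, π (y : g) = y)
    (hπR : ∀ r ∈ R, π r = 0)
    (p q : ℕ)
    (f : AlternatingMap 𝕂 n n (Fin (p + 1)))
    (h : AlternatingMap 𝕂 n n (Fin (q + 1)))
    (hf : RInvt R n hid f) (hh : RInvt R n hid h) :
    (∀ x : Fin (p + q + 1) → g,
        nrBr 𝕂 p q (iFunR n π ⇑f) (iFunR n π ⇑h) x =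
          iFunR n π (nrBr 𝕂 p q ⇑f ⇑h) x) ∧
    (∀ x : Fin (p + 2) → g,
        ceD (iFunR n π ⇑f) x = iFunR n π (ceD ⇑f) x) := by

  have hsub : ∀ z : g, z - (π z : g) ∈ R := by
    intro z
    obtain ⟨a, b, ha, hb, hab⟩ := Submodule.codisjoint_iff_exists_add_eq.mp hcompl.codisjoint z
    have ha' : a ∈ R := ha
    have hπz : (π z : g) = b := by
      have h2 : π b = ⟨b, hb⟩ := hπn ⟨b, hb⟩
      rw [← hab, map_add, hπR a ha', h2, zero_add]
    rw [hπz, ← hab, add_sub_cancel_right]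
    exact ha'
  constructor
  · intro x
    exact part1 n π hπn p q ⇑f ⇑h x
  · intro x
    exact part2 R n hid π hπn hπR hsub p f hf x
end

section
/- Let n be a finite-dimensional nilpotent Lie algebra with bracket φ, T a torus of derivations of n, a a one-dimensional central T-stable ideal with weight β, and b a T-stable complement of a in n, so that φ = φ₀ + ψ with φ₀ the bracket induced on n/a (transported to b) and ψ ∈ Z^2(n/a, a)^T. If T has no zero weight on n/a, then the weight space (ker φ̃)_β of the induced map φ̃ : Λ²n → n equals (ker φ̃₀)_β ∩ (ker ψ̃)_β, where φ̃₀ and ψ̃ are the maps Λ²(n/a) → n/a and Λ²(n/a) → a induced by φ₀ and ψ. -/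
/-! Statement 11: the `β`-weight space of `ker(φ̃ : Λ²n → n)` is
`(ker φ̃₀)_β ∩ (ker ψ̃)_β` when the torus has no zero weight on `n/a ≅ b`. -/

open scoped BigOperators

set_option synthInstance.maxHeartbeats 1000000
set_option maxSynthPendingDepth 3
set_option maxHeartbeats 1000000

/-- The wedge `x ∧ y` as an element of the second exterior power `⋀[𝕂]^2 M`. -/
def wedge2 (𝕂 : Type*) {M : Type*} [CommRing 𝕂] [AddCommGroup M] [Module 𝕂 M]
    (x y : M) : ↥(⋀[𝕂]^2 M) :=
  ⟨ExteriorAlgebra.ιMulti 𝕂 2 ![x, y],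
    ExteriorAlgebra.ιMulti_range 𝕂 2 (Set.mem_range_self _)⟩

section Aux
variable {R M N : Type*} [CommRing R] [AddCommGroup M] [Module R M]
  [AddCommGroup N] [Module R N]

lemma wedge2_coe (x y : M) : (wedge2 R x y : ExteriorAlgebra R M)
    = ExteriorAlgebra.ι R x * ExteriorAlgebra.ι R y := by
  show ExteriorAlgebra.ιMulti R 2 ![x, y] = _
  rw [ExteriorAlgebra.ιMulti_apply]
  simp

lemma wedge2_add_left (x x' y : M) :
    wedge2 R (x + x') y = wedge2 R x y + wedge2 R x' y :=
  Subtype.ext <| by simp [wedge2_coe, add_mul]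

lemma wedge2_add_right (x y y' : M) :
    wedge2 R x (y + y') = wedge2 R x y + wedge2 R x y' :=
  Subtype.ext <| by simp [wedge2_coe, mul_add]

lemma wedge2_smul_left (r : R) (x y : M) :
    wedge2 R (r • x) y = r • wedge2 R x y :=
  Subtype.ext <| by simp [wedge2_coe, smul_mul_assoc]

lemma wedge2_smul_right (r : R) (x y : M) :
    wedge2 R x (r • y) = r • wedge2 R x y :=
  Subtype.ext <| by simp [wedge2_coe, mul_smul_comm]

lemma wedge2_sub_left (x x' y : M) :
    wedge2 R (x - x') y = wedge2 R x y - wedge2 R x' y :=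
  Subtype.ext <| by simp [wedge2_coe, sub_mul]

lemma wedge2_sub_right (x y y' : M) :
    wedge2 R x (y - y') = wedge2 R x y - wedge2 R x y' :=
  Subtype.ext <| by simp [wedge2_coe, mul_sub]

lemma wedge2_self (x : M) : wedge2 R x x = 0 :=
  Subtype.ext <| by simp [wedge2_coe, ExteriorAlgebra.ι_sq_zero]

lemma wedge2_anticomm (x y : M) : wedge2 R y x = - wedge2 R x y :=
  Subtype.ext <| by
    simp only [wedge2_coe, Submodule.coe_neg]
    rw [eq_neg_iff_add_eq_zero, add_comm]
    exact ExteriorAlgebra.ι_add_mul_swap x y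

lemma vec2_eta (v : Fin 2 → M) : ![v 0, v 1] = v := by
  funext i; fin_cases i <;> rfl

lemma wedge2_span :
    Submodule.span R (Set.range fun p : M × M => wedge2 R p.1 p.2) = ⊤ := by
  apply Submodule.map_injective_of_injective (⋀[R]^2 M).injective_subtype
  have himg : ((⋀[R]^2 M).subtype '' Set.range fun p : M × M => wedge2 R p.1 p.2)
      = Set.range (ExteriorAlgebra.ιMulti R 2) := by
    ext z
    constructor
    · rintro ⟨_, ⟨⟨x, y⟩, rfl⟩, rfl⟩
      exact ⟨![x, y], rfl⟩
    · rintro ⟨v, rfl⟩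
      exact ⟨wedge2 R (v 0) (v 1), ⟨(v 0, v 1), rfl⟩, by rw [← vec2_eta v]; rfl⟩
  rw [Submodule.map_span, Submodule.map_top, Submodule.range_subtype, himg,
    ExteriorAlgebra.ιMulti_span_fixedDegree]

lemma wedge2_ext {f g : ↥(⋀[R]^2 M) →ₗ[R] N}
    (h : ∀ x y : M, f (wedge2 R x y) = g (wedge2 R x y)) : f = g :=
  LinearMap.ext_on wedge2_span (by rintro _ ⟨⟨x, y⟩, rfl⟩; exact h x y)

/-- A bilinear alternating map as an `AlternatingMap` in two variables. -/
def altTwo (m : M →ₗ[R] M →ₗ[R] N) (hm : ∀ x, m x x = 0) : M [⋀^Fin 2]→ₗ[R] N where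
  toFun v := m (v 0) (v 1)
  map_update_add' v i x y := by
    fin_cases i <;>
      simp [Function.update, Fin.ext_iff]
  map_update_smul' v i r x := by
    fin_cases i <;>
      simp [Function.update, Fin.ext_iff]
  map_eq_zero_of_eq' v i j hv hij := by
    have h01 : v 0 = v 1 := by
      fin_cases i <;> fin_cases j <;>
        first | exact hv | exact hv.symm | exact absurd rfl hij
    show m (v 0) (v 1) = 0
    rw [h01]; exact hm _

/-- Induce a linear map on `⋀² M` from a bilinear alternating map. -/
noncomputable def liftWedge (m : M →ₗ[R] M →ₗ[R] N) (hm : ∀ x, m x x = 0) :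
    ↥(⋀[R]^2 M) →ₗ[R] N :=
  (ExteriorAlgebra.liftAlternating
      (fun i => match i with | 2 => altTwo m hm | _ => 0)) ∘ₗ
    (⋀[R]^2 M).subtype

lemma liftWedge_apply (m : M →ₗ[R] M →ₗ[R] N) (hm : ∀ x, m x x = 0) (x y : M) :
    liftWedge m hm (wedge2 R x y) = m x y := by
  show ExteriorAlgebra.liftAlternating _ (ExteriorAlgebra.ιMulti R 2 ![x, y]) = m x y
  rw [ExteriorAlgebra.liftAlternating_apply_ιMulti]
  show altTwo m hm ![x, y] = m x y
  simp [altTwo]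

end Aux

/-- Let `n` be a finite-dimensional nilpotent Lie algebra with bracket `φ`,
`T` a torus of derivations, `a` a one-dimensional central `T`-stable ideal of weight `β`, and
`b` a `T`-stable complement of `a`, so that `φ = φ₀ + ψ`.  If `T` has no zero weight on
`n/a ≅ b`, then `(ker φ̃)_β = (ker φ̃₀)_β ∩ (ker ψ̃)_β` (the right-hand side being viewed
inside `Λ²n` via the embedding `j : Λ²b → Λ²n`). -/
theorem weight_space_ker_bracket_eq
    {𝕂 n : Type*} [Field 𝕂] [CharZero 𝕂] [LieRing n] [LieAlgebra 𝕂 n]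
    [FiniteDimensional 𝕂 n] [LieRing.IsNilpotent n] {ι : Type*}
    -- the torus `T`
    (δ : ι → Module.End 𝕂 n)
    (hder : ∀ i, ∀ x y : n, δ i ⁅x, y⁆ = ⁅δ i x, y⁆ + ⁅x, δ i y⁆)
    (hcomm : ∀ i j, Commute (δ i) (δ j))
    (hss : ∀ i, (δ i).IsSemisimple)
    -- the central one-dimensional `T`-stable ideal `a` of weight `β`
    (a : Submodule 𝕂 n)
    (hcentral : ∀ x : n, ∀ y ∈ a, ⁅x, y⁆ = 0)
    (hdim : Module.finrank 𝕂 ↥a = 1)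
    (hast : ∀ i, ∀ y ∈ a, δ i y ∈ a)
    (β : ι → 𝕂)
    (hweight : ∀ i, ∀ y ∈ a, δ i y = β i • y)
    -- the `T`-stable complement `b`, identified with `n/a`
    (b : Submodule 𝕂 n)
    (hcompl : IsCompl a b)
    (hbst : ∀ i, ∀ x ∈ b, δ i x ∈ b)
    -- `T` has no zero weight on `n/a ≅ b`
    (hnozero : ∀ x ∈ b, (∀ i, δ i x = 0) → x = 0)
    -- the projections onto `b` along `a` and onto `a` along `b`
    (prB : n →ₗ[𝕂] ↥b) (hprB1 : ∀ u : ↥b, prB (u : n) = u) (hprB0 : ∀ y ∈ a, prB y = 0)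
    (prA : n →ₗ[𝕂] ↥a) (hprA1 : ∀ y : ↥a, prA (y : n) = y) (hprA0 : ∀ u ∈ b, prA u = 0)
    -- the maps induced on exterior squares
    (φt : ↥(⋀[𝕂]^2 n) →ₗ[𝕂] n)
    (hφt : ∀ x y : n, φt (wedge2 𝕂 x y) = ⁅x, y⁆)
    (φ0t : ↥(⋀[𝕂]^2 ↥b) →ₗ[𝕂] ↥b)
    (hφ0t : ∀ u v : ↥b, φ0t (wedge2 𝕂 u v) = prB ⁅(u : n), (v : n)⁆)
    (ψt : ↥(⋀[𝕂]^2 ↥b) →ₗ[𝕂] ↥a)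
    (hψt : ∀ u v : ↥b, ψt (wedge2 𝕂 u v) = prA ⁅(u : n), (v : n)⁆)
    -- the canonical embedding `j : Λ²b → Λ²n`
    (j : ↥(⋀[𝕂]^2 ↥b) →ₗ[𝕂] ↥(⋀[𝕂]^2 n))
    (hj : ∀ u v : ↥b, j (wedge2 𝕂 u v) = wedge2 𝕂 (u : n) (v : n))
    -- the induced torus actions on the exterior squares
    (D2n : ι → Module.End 𝕂 ↥(⋀[𝕂]^2 n))
    (hD2n : ∀ i, ∀ x y : n,
      D2n i (wedge2 𝕂 x y) = wedge2 𝕂 (δ i x) y + wedge2 𝕂 x (δ i y))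
    (D2b : ι → Module.End 𝕂 ↥(⋀[𝕂]^2 ↥b))
    (hD2b : ∀ i, ∀ u v : ↥b,
      D2b i (wedge2 𝕂 u v) =
        wedge2 𝕂 ((δ i).restrict (hbst i) u) v + wedge2 𝕂 u ((δ i).restrict (hbst i) v)) :
    (⨅ i, Module.End.eigenspace (D2n i) (β i)) ⊓ LinearMap.ker φt =
      Submodule.map j
        ((⨅ i, Module.End.eigenspace (D2b i) (β i)) ⊓ LinearMap.ker φ0t ⊓
          LinearMap.ker ψt) := by
  classical
  set δb : ι → Module.End 𝕂 ↥b := fun i => (δ i).restrict (hbst i) with hδbdef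
  let B : Module.Basis (Fin 1) 𝕂 ↥a := Module.finBasisOfFinrankEq 𝕂 ↥a hdim
  set e0 : ↥a := B 0 with he0
  set e : n := (e0 : n) with he
  set c : n →ₗ[𝕂] 𝕂 := (B.coord 0) ∘ₗ prA with hcdef
  -- decomposition x = prA x + prB x
  have hdec : ∀ x : n, x = ((prA x : n)) + ((prB x : n)) := by
    intro x
    have hx : x ∈ a ⊔ b := by rw [hcompl.sup_eq_top]; trivial
    obtain ⟨ya, hya, ub, hub, hsum⟩ := Submodule.mem_sup.mp hx
    have h1 : prA x = ⟨ya, hya⟩ := by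
      rw [← hsum, map_add, hprA0 ub hub, add_zero]
      exact hprA1 ⟨ya, hya⟩
    have h2 : prB x = ⟨ub, hub⟩ := by
      rw [← hsum, map_add, hprB0 ya hya, zero_add]
      exact hprB1 ⟨ub, hub⟩
    rw [h1, h2]; exact hsum.symm
  have hrepr : ∀ y : ↥a, (B.coord 0 y) • e0 = y := by
    intro y
    have := B.sum_repr y
    rw [Fin.sum_univ_one] at this
    simpa [Module.Basis.coord_apply] using this
  have hdecc : ∀ x : n, x = c x • e + ((prB x : n)) := by
    intro x
    conv_lhs => rw [hdec x]
    congr 1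
    have := congrArg (Subtype.val (p := (· ∈ a))) (hrepr (prA x))
    simpa [hcdef] using this.symm
  have hce : c e = 1 := by
    rw [hcdef]
    simp only [LinearMap.comp_apply, he]
    rw [hprA1 e0, he0, Module.Basis.coord_apply, Module.Basis.repr_self, Finsupp.single_eq_same]
  have hδe : ∀ i, δ i e = β i • e := fun i => hweight i e (by rw [he]; exact e0.2)
  have hprBδ : ∀ i (x : n), prB (δ i x) = δb i (prB x) := by
    intro i x
    conv_lhs => rw [hdec x]
    rw [map_add, map_add, hprB0 _ (hast i _ (prA x).2), zero_add]
    have h1 : δ i ((prB x : n)) = ((δb i (prB x) : ↥b) : n) :=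
      (LinearMap.restrict_coe_apply _ _ _).symm
    rw [h1, hprB1]
  have hprAδ : ∀ i (x : n), prA (δ i x) = β i • prA x := by
    intro i x
    conv_lhs => rw [hdec x]
    rw [map_add, map_add, hprA0 _ (hbst i _ (prB x).2), add_zero,
      hweight i _ (prA x).2, map_smul, hprA1]
  have hcδ : ∀ i (x : n), c (δ i x) = β i * c x := by
    intro i x
    rw [hcdef]
    simp [LinearMap.comp_apply, hprAδ i x]
  -- the projection Ψ : Λ²n → Λ²b
  set mΨ : n →ₗ[𝕂] n →ₗ[𝕂] ↥(⋀[𝕂]^2 ↥b) :=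
    LinearMap.mk₂ 𝕂 (fun x y => wedge2 𝕂 (prB x) (prB y))
      (fun x x' y => by rw [map_add, wedge2_add_left])
      (fun r x y => by rw [map_smul, wedge2_smul_left])
      (fun x y y' => by rw [map_add, wedge2_add_right])
      (fun r x y => by rw [map_smul, wedge2_smul_right]) with hmΨ
  set Ψ : ↥(⋀[𝕂]^2 n) →ₗ[𝕂] ↥(⋀[𝕂]^2 ↥b) :=
    liftWedge mΨ (fun x => wedge2_self _) with hΨdef
  have hΨ : ∀ x y : n, Ψ (wedge2 𝕂 x y) = wedge2 𝕂 (prB x) (prB y) := fun x y =>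
    liftWedge_apply _ _ x y
  -- the component map Mt : Λ²n → b
  set mM : n →ₗ[𝕂] n →ₗ[𝕂] ↥b :=
    LinearMap.mk₂ 𝕂 (fun x y => c x • prB y - c y • prB x)
      (fun x x' y => by simp only [map_add, add_smul, smul_add]; module)
      (fun r x y => by simp only [map_smul, smul_eq_mul]; module)
      (fun x y y' => by simp only [map_add, add_smul, smul_add]; module)
      (fun r x y => by simp only [map_smul, smul_eq_mul]; module) with hmM
  set Mt : ↥(⋀[𝕂]^2 n) →ₗ[𝕂] ↥b :=
    liftWedge mM (fun x => sub_self _) with hMdef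
  have hMt : ∀ x y : n, Mt (wedge2 𝕂 x y) = c x • prB y - c y • prB x := fun x y =>
    liftWedge_apply _ _ x y
  -- the map L : b → Λ²n, u ↦ e ∧ u
  set L : ↥b →ₗ[𝕂] ↥(⋀[𝕂]^2 n) :=
    { toFun := fun u => wedge2 𝕂 e (u : n)
      map_add' := fun u v => by rw [Submodule.coe_add, wedge2_add_right]
      map_smul' := fun r u => by
        rw [SetLike.val_smul, wedge2_smul_right]; rfl } with hLdef
  have hLw : ∀ u : ↥b, L u = wedge2 𝕂 e (u : n) := fun u => rfl
  -- identity A : φt ∘ j = incl_b ∘ φ0t + incl_a ∘ ψt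
  have hA : ∀ z, φt (j z) = ((φ0t z : n)) + ((ψt z : n)) := by
    have : φt ∘ₗ j = b.subtype ∘ₗ φ0t + a.subtype ∘ₗ ψt := by
      apply wedge2_ext
      intro u v
      simp only [LinearMap.comp_apply, LinearMap.add_apply, hj, hφt, hφ0t, hψt,
        Submodule.coe_subtype]
      rw [add_comm]
      exact hdec _
    intro z
    simpa using LinearMap.congr_fun this z
  -- identity B : D2n ∘ j = j ∘ D2b
  have hB : ∀ i z, D2n i (j z) = j (D2b i z) := by
    intro i
    have : (D2n i) ∘ₗ j = j ∘ₗ (D2b i) := by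
      apply wedge2_ext
      intro u v
      simp only [LinearMap.comp_apply, hj, hD2n, hD2b i u v, map_add, hj,
        LinearMap.restrict_coe_apply]
    intro z
    simpa using LinearMap.congr_fun this z
  -- identity D : Ψ ∘ D2n = D2b ∘ Ψ
  have hD : ∀ i w, Ψ (D2n i w) = D2b i (Ψ w) := by
    intro i
    have : Ψ ∘ₗ (D2n i) = (D2b i) ∘ₗ Ψ := by
      apply wedge2_ext
      intro x y
      simp only [LinearMap.comp_apply, hD2n, map_add, hΨ, hD2b i (prB x) (prB y),
        hprBδ i]
      rfl
    intro w
    simpa using LinearMap.congr_fun this w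
  -- identity E : Mt ∘ D2n = β • Mt + δb ∘ Mt
  have hE : ∀ i w, Mt (D2n i w) = β i • Mt w + δb i (Mt w) := by
    intro i
    have : Mt ∘ₗ (D2n i) = β i • Mt + (δb i) ∘ₗ Mt := by
      apply wedge2_ext
      intro x y
      simp only [LinearMap.comp_apply, LinearMap.add_apply, LinearMap.smul_apply,
        hD2n, map_add, hMt, hcδ i, hprBδ i, map_sub, map_smul, smul_sub, smul_smul]
      module
    intro w
    simpa using LinearMap.congr_fun this w
  -- identity F : id = j ∘ Ψ + L ∘ Mt
  have hF : ∀ w : ↥(⋀[𝕂]^2 n), w = j (Ψ w) + L (Mt w) := by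
    have : (LinearMap.id : ↥(⋀[𝕂]^2 n) →ₗ[𝕂] ↥(⋀[𝕂]^2 n)) = j ∘ₗ Ψ + L ∘ₗ Mt := by
      apply wedge2_ext
      intro x y
      simp only [LinearMap.id_apply, LinearMap.comp_apply, LinearMap.add_apply,
        hΨ, hMt, hj, hLw]
      conv_lhs => rw [hdecc x, hdecc y]
      simp only [wedge2_add_left, wedge2_add_right, wedge2_sub_left, wedge2_sub_right,
        wedge2_smul_left, wedge2_smul_right, wedge2_self, AddSubgroupClass.coe_sub,
        SetLike.val_smul, smul_zero]
      rw [wedge2_anticomm e ((prB x : n))]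
      module
    intro w
    simpa using LinearMap.congr_fun this w
  -- main proof
  apply le_antisymm
  · intro w hw
    rw [Submodule.mem_inf, Submodule.mem_iInf] at hw
    obtain ⟨hw1, hw2⟩ := hw
    have hweig : ∀ i, D2n i w = β i • w := fun i =>
      Module.End.mem_eigenspace_iff.mp (hw1 i)
    have hker : φt w = 0 := LinearMap.mem_ker.mp hw2
    have hzeig : ∀ i, D2b i (Ψ w) = β i • Ψ w := by
      intro i
      rw [← hD i w, hweig i, map_smul]
    have hx0 : Mt w = 0 := by
      have hδ0 : ∀ i, δb i (Mt w) = 0 := by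
        intro i
        have h1 := hE i w
        rw [hweig i, map_smul] at h1
        have := h1.symm
        rwa [add_eq_left] at this
      have h2 : ∀ i, δ i ((Mt w : n)) = 0 := by
        intro i
        have := congrArg (Subtype.val) (hδ0 i)
        rwa [LinearMap.restrict_coe_apply] at this
      exact Subtype.ext (hnozero _ (Mt w).2 h2)
    have hwz : w = j (Ψ w) := by
      conv_lhs => rw [hF w]
      rw [hx0, map_zero, add_zero]
    have hsum : ((φ0t (Ψ w) : n)) + ((ψt (Ψ w) : n)) = 0 := by
      rw [← hA, ← hwz]; exact hker
    have hφ0 : φ0t (Ψ w) = 0 := by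
      have hmem : ((φ0t (Ψ w) : n)) ∈ a := by
        rw [eq_neg_of_add_eq_zero_left hsum]
        exact a.neg_mem (ψt (Ψ w)).2
      exact Subtype.ext
        (Submodule.disjoint_def.mp hcompl.disjoint _ hmem (φ0t (Ψ w)).2)
    have hψ0 : ψt (Ψ w) = 0 := by
      rw [hφ0] at hsum
      simpa using hsum
    refine Submodule.mem_map.mpr ⟨Ψ w, ?_, hwz.symm⟩
    refine ⟨⟨?_, LinearMap.mem_ker.mpr hφ0⟩, LinearMap.mem_ker.mpr hψ0⟩
    exact Submodule.mem_iInf _ |>.mpr fun i =>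
      Module.End.mem_eigenspace_iff.mpr (hzeig i)
  · intro w hw
    obtain ⟨z, hz, rfl⟩ := Submodule.mem_map.mp hw
    obtain ⟨⟨hz1, hz2⟩, hz3⟩ := hz
    have hz1' : ∀ i, D2b i z = β i • z := fun i =>
      Module.End.mem_eigenspace_iff.mp (Submodule.mem_iInf _ |>.mp hz1 i)
    refine Submodule.mem_inf.mpr ⟨?_, ?_⟩
    · exact Submodule.mem_iInf _ |>.mpr fun i =>
        Module.End.mem_eigenspace_iff.mpr
          (by rw [hB i z, hz1' i, map_smul])
    · refine LinearMap.mem_ker.mpr ?_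
      rw [hA z, LinearMap.mem_ker.mp hz2, LinearMap.mem_ker.mp hz3]
      simp
end

section
/- Consider the four-dimensional initialization with distinct torus weights α₁, α₂, α₃, α₄ and the weight set π = {α_i} ∪ {α_i + α_j : (i,j) ≠ (1,4)} ∪ {α_i+α_j+α_k : (i,j,k) ≠ (2,3,4)} ∪ {α₁+α₂+α₃+α₄}. Impose the normalizations X_{α,β} = 1 for (α,β) in the admissible set A₄ described in the paper. Then the scheme of T-invariant Lie laws in the resulting slice is cut out by the single equation u·v = 0 in the two remaining essential parameters u = X_{α₁, α₂+α₃} and v = X_{α₄, α₁+α₂+α₃}; i.e. the slice is isomorphic to Spec(𝕂[u,v]/(uv)). -/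
/-! Statement 18: the slice of the scheme of `T`-invariant Lie laws for the four-dimensional
initialization is cut out by the single equation `u · v = 0`; i.e. the slice is
`Spec 𝕂[u,v]/(uv)` — formalized here at the level of points: the two essential parameters
`u = X_{α₁,α₂+α₃}` and `v = X_{α₄,α₁+α₂+α₃}` give a bijection of the slice with
`{(u,v) : uv = 0}`. -/

open scoped BigOperators

/-- The four torus weights `α₁, …, α₄`, realized as the standard basis of `ℤ⁴`. -/
def wt (i : Fin 4) : Fin 4 → ℤ := Pi.single i 1

/-- The weight set `π` of the paper:
`{α_i} ∪ {α_i+α_j : (i,j) ≠ (1,4)} ∪ {α_i+α_j+α_k : (i,j,k) ≠ (2,3,4)} ∪ {α₁+α₂+α₃+α₄}`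
(with 0-based indices). -/
def piSet : Set (Fin 4 → ℤ) :=
  {w | (∃ i, w = wt i) ∨
    (∃ i j, i < j ∧ ¬(i = 0 ∧ j = 3) ∧ w = wt i + wt j) ∨
    (∃ i j k, i < j ∧ j < k ∧ ¬(i = 1 ∧ j = 2 ∧ k = 3) ∧ w = wt i + wt j + wt k) ∨
    w = wt 0 + wt 1 + wt 2 + wt 3}

/-- The admissible set `A₄` of normalized coordinates. -/
def A4 : Set ((Fin 4 → ℤ) × (Fin 4 → ℤ)) :=
  {(wt 0, wt 1), (wt 0, wt 2), (wt 1, wt 2), (wt 1, wt 3), (wt 2, wt 3),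
    (wt 3, wt 0 + wt 2), (wt 3, wt 0 + wt 1), (wt 2, wt 0 + wt 1),
    (wt 1, wt 0 + wt 2 + wt 3)}

/-- A point of the slice: a `T`-invariant Lie law with coordinates `X_{α,β}` indexed by pairs
of weights, satisfying the Jacobi relations and the normalizations `X_{α,β} = 1` on `A₄`. -/
def IsSliceLaw {𝕂 : Type*} [Field 𝕂] (X : (Fin 4 → ℤ) → (Fin 4 → ℤ) → 𝕂) : Prop :=
  (∀ a b, (a ∉ piSet ∨ b ∉ piSet ∨ a + b ∉ piSet) → X a b = 0) ∧
  (∀ a b, X a b = - X b a) ∧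
  (∀ a b c, a ∈ piSet → b ∈ piSet → c ∈ piSet → a + b + c ∈ piSet →
      X a b * X (a + b) c + X b c * X (b + c) a + X c a * X (c + a) b = 0) ∧
  (∀ p ∈ A4, X p.1 p.2 = 1)

/- ### Auxiliary machinery -/

instance instDecWt (w : Fin 4 → ℤ) : Decidable (w ∈ piSet) :=
  decidable_of_iff ((∃ i, w = wt i) ∨
    (∃ i j, i < j ∧ ¬(i = 0 ∧ j = 3) ∧ w = wt i + wt j) ∨
    (∃ i j k, i < j ∧ j < k ∧ ¬(i = 1 ∧ j = 2 ∧ k = 3) ∧ w = wt i + wt j + wt k) ∨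
    w = wt 0 + wt 1 + wt 2 + wt 3) Iff.rfl

def mask (w : Fin 4 → ℤ) : ℕ := (w 0).toNat + 2*(w 1).toNat + 4*(w 2).toNat + 8*(w 3).toNat

def SM : List ℕ := [1,2,4,8,3,5,6,10,12,7,11,13,15]

/-- one-sided coefficient table: value of `X_{A,B}` as `(c₁, c_u, c_v)`. -/
def g3 : ℕ → ℕ → ℤ × ℤ × ℤ
  | 1, 2 => (1,0,0) | 1, 4 => (1,0,0) | 2, 4 => (1,0,0) | 2, 8 => (1,0,0) | 4, 8 => (1,0,0)
  | 8, 5 => (1,0,0) | 8, 3 => (1,0,0) | 4, 3 => (1,0,0) | 2, 13 => (1,0,0)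
  | 1, 6 => (0,1,0) | 2, 5 => (1,1,0) | 1, 10 => (-1,0,0) | 1, 12 => (-1,0,0)
  | 4, 11 => (-1,0,1) | 8, 7 => (0,0,1) | 3, 12 => (1,0,0) | 5, 10 => (-1,0,1)
  | _, _ => (0,0,0)

def f3 (m n : ℕ) : ℤ × ℤ × ℤ := g3 m n - g3 n m

def T3 (m n : ℕ) : ℤ × ℤ × ℤ := if m ∈ SM ∧ n ∈ SM ∧ (m + n) ∈ SM then f3 m n else 0

def mul5 (x y : ℤ × ℤ × ℤ) : ℤ × ℤ × ℤ × ℤ × ℤ :=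
  (x.1*y.1, x.1*y.2.1 + x.2.1*y.1, x.1*y.2.2 + x.2.2*y.1, x.2.1*y.2.1, x.2.2*y.2.2)

lemma masterJ : ∀ m ∈ SM, ∀ n ∈ SM, ∀ p ∈ SM, (m + n + p) ∈ SM →
    mul5 (T3 m n) (T3 (m+n) p) + mul5 (T3 n p) (T3 (n+p) m) + mul5 (T3 p m) (T3 (p+m) n)
      = ((0 : ℤ), (0 : ℤ), (0 : ℤ), (0 : ℤ), (0 : ℤ)) := by decide

lemma pi_cases (w : Fin 4 → ℤ) (h : w ∈ piSet) :
    w = wt 0 ∨ w = wt 1 ∨ w = wt 2 ∨ w = wt 3 ∨ w = wt 0 + wt 1 ∨ w = wt 0 + wt 2 ∨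
    w = wt 1 + wt 2 ∨ w = wt 1 + wt 3 ∨ w = wt 2 + wt 3 ∨ w = wt 0 + wt 1 + wt 2 ∨
    w = wt 0 + wt 1 + wt 3 ∨ w = wt 0 + wt 2 + wt 3 ∨ w = wt 0 + wt 1 + wt 2 + wt 3 := by
  obtain ⟨i, rfl⟩ | ⟨i, j, h1, h2, rfl⟩ | ⟨i, j, k, h1, h2, h3, rfl⟩ | rfl := h
  · fin_cases i <;> simp
  · fin_cases i <;> fin_cases j <;> revert h1 h2 <;> decide
  · fin_cases i <;> fin_cases j <;> fin_cases k <;> revert h1 h2 h3 <;> decide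
  · simp

lemma pi_entries (w : Fin 4 → ℤ) (h : w ∈ piSet) : ∀ i, w i = 0 ∨ w i = 1 := by
  rcases pi_cases w h with rfl|rfl|rfl|rfl|rfl|rfl|rfl|rfl|rfl|rfl|rfl|rfl|rfl <;> decide

lemma entries_nonneg {w : Fin 4 → ℤ} (h : ∀ i, w i = 0 ∨ w i = 1) : ∀ i, 0 ≤ w i :=
  fun i => by rcases h i with h'|h' <;> omega

lemma mask_add (a b : Fin 4 → ℤ) (ha : ∀ i, 0 ≤ a i) (hb : ∀ i, 0 ≤ b i) :
    mask (a + b) = mask a + mask b := by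
  unfold mask
  simp only [Pi.add_apply]
  rw [Int.toNat_add (ha 0) (hb 0), Int.toNat_add (ha 1) (hb 1),
    Int.toNat_add (ha 2) (hb 2), Int.toNat_add (ha 3) (hb 3)]
  ring

lemma vec_repr (w : Fin 4 → ℤ) : w = ![w 0, w 1, w 2, w 3] := by
  funext i; fin_cases i <;> rfl

lemma mask_mem (w : Fin 4 → ℤ) (h : ∀ i, w i = 0 ∨ w i = 1) :
    w ∈ piSet ↔ mask w ∈ SM := by
  rw [vec_repr w]
  rcases h 0 with h0|h0 <;> rcases h 1 with h1|h1 <;> rcases h 2 with h2|h2 <;>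
    rcases h 3 with h3|h3 <;> rw [h0, h1, h2, h3] <;> decide

def ev {𝕂 : Type*} [Field 𝕂] (u v : 𝕂) (x : ℤ × ℤ × ℤ) : 𝕂 :=
  (x.1 : 𝕂) + (x.2.1 : 𝕂) * u + (x.2.2 : 𝕂) * v

lemma ev_mk {𝕂 : Type*} [Field 𝕂] (u v : 𝕂) (x y z : ℤ) :
    ev u v (x, y, z) = (x : 𝕂) + (y : 𝕂) * u + (z : 𝕂) * v := rfl

/-- The canonical slice law with parameters `u`, `v`. -/
def X0 {𝕂 : Type*} [Field 𝕂] (u v : 𝕂) (a b : Fin 4 → ℤ) : 𝕂 :=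
  if a ∈ piSet ∧ b ∈ piSet ∧ a + b ∈ piSet then ev u v (f3 (mask a) (mask b)) else 0

lemma key3 {𝕂 : Type*} [Field 𝕂] (u v : 𝕂) (huv : u * v = 0) (x1 x2 y1 y2 z1 z2 : ℤ × ℤ × ℤ)
    (h : mul5 x1 x2 + mul5 y1 y2 + mul5 z1 z2 = ((0 : ℤ), (0 : ℤ), (0 : ℤ), (0 : ℤ), (0 : ℤ))) :
    ev u v x1 * ev u v x2 + ev u v y1 * ev u v y2 + ev u v z1 * ev u v z2 = 0 := by
  obtain ⟨a0, a1, a2⟩ := x1; obtain ⟨b0, b1, b2⟩ := x2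
  obtain ⟨c0, c1, c2⟩ := y1; obtain ⟨d0, d1, d2⟩ := y2
  obtain ⟨e0, e1, e2⟩ := z1; obtain ⟨f0, f1, f2⟩ := z2
  simp only [mul5, Prod.mk_add_mk, Prod.mk.injEq] at h
  obtain ⟨h1, h2, h3, h4, h5⟩ := h
  have q1 := congrArg (fun z : ℤ => (z : 𝕂)) h1
  have q2 := congrArg (fun z : ℤ => (z : 𝕂)) h2
  have q3 := congrArg (fun z : ℤ => (z : 𝕂)) h3
  have q4 := congrArg (fun z : ℤ => (z : 𝕂)) h4
  have q5 := congrArg (fun z : ℤ => (z : 𝕂)) h5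
  push_cast at q1 q2 q3 q4 q5
  simp only [ev_mk]
  linear_combination q1 + q2 * u + q3 * v + q4 * (u * u) + q5 * (v * v) +
    ((a1 : 𝕂)*b2 + (a2 : 𝕂)*b1 + (c1 : 𝕂)*d2 + (c2 : 𝕂)*d1 + (e1 : 𝕂)*f2 + (e2 : 𝕂)*f1) * huv

lemma X0_eval {𝕂 : Type*} [Field 𝕂] (u v : 𝕂) (a b : Fin 4 → ℤ)
    (ea : ∀ i, a i = 0 ∨ a i = 1) (eb : ∀ i, b i = 0 ∨ b i = 1)
    (eab : ∀ i, (a + b) i = 0 ∨ (a + b) i = 1) :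
    X0 u v a b = ev u v (T3 (mask a) (mask b)) := by
  have hmadd : mask (a + b) = mask a + mask b :=
    mask_add a b (entries_nonneg ea) (entries_nonneg eb)
  have hiff : (a ∈ piSet ∧ b ∈ piSet ∧ a + b ∈ piSet) ↔
      (mask a ∈ SM ∧ mask b ∈ SM ∧ mask a + mask b ∈ SM) := by
    rw [mask_mem a ea, mask_mem b eb, ← hmadd, mask_mem _ eab]
  unfold X0 T3
  by_cases h : mask a ∈ SM ∧ mask b ∈ SM ∧ mask a + mask b ∈ SM
  · rw [if_pos (hiff.mpr h), if_pos h]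
  · rw [if_neg (fun hh => h (hiff.mp hh)), if_neg h]
    simp [ev]

lemma X0_zero {𝕂 : Type*} [Field 𝕂] (u v : 𝕂) :
    ∀ a b, (a ∉ piSet ∨ b ∉ piSet ∨ a + b ∉ piSet) → X0 u v a b = 0 := by
  intro a b h
  unfold X0
  rw [if_neg (by tauto)]

lemma f3_anti (m n : ℕ) : f3 m n = -(f3 n m) := by
  unfold f3; rw [neg_sub]

lemma ev_neg {𝕂 : Type*} [Field 𝕂] (u v : 𝕂) (x : ℤ × ℤ × ℤ) :
    ev u v (-x) = - ev u v x := by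
  obtain ⟨x0, x1, x2⟩ := x
  simp only [Prod.neg_mk, ev_mk]
  push_cast
  ring

lemma X0_anti {𝕂 : Type*} [Field 𝕂] (u v : 𝕂) :
    ∀ a b, X0 u v a b = - X0 u v b a := by
  intro a b
  have hc : b + a = a + b := add_comm b a
  unfold X0
  by_cases h : a ∈ piSet ∧ b ∈ piSet ∧ a + b ∈ piSet
  · rw [if_pos h, if_pos ⟨h.2.1, h.1, by rw [hc]; exact h.2.2⟩, f3_anti, ev_neg]
  · rw [if_neg h, if_neg (fun hh => h ⟨hh.2.1, hh.1, by rw [← hc]; exact hh.2.2⟩)]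
    simp

lemma X0_jacobi {𝕂 : Type*} [Field 𝕂] (u v : 𝕂) (huv : u * v = 0) :
    ∀ a b c, a ∈ piSet → b ∈ piSet → c ∈ piSet → a + b + c ∈ piSet →
      X0 u v a b * X0 u v (a + b) c + X0 u v b c * X0 u v (b + c) a +
        X0 u v c a * X0 u v (c + a) b = 0 := by
  intro a b c ha hb hc hs
  have ea := pi_entries a ha
  have eb := pi_entries b hb
  have ec := pi_entries c hc
  have es := pi_entries _ hs
  have na := entries_nonneg ea
  have nb := entries_nonneg eb
  have nc := entries_nonneg ec
  have eab : ∀ i, (a + b) i = 0 ∨ (a + b) i = 1 := by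
    intro i
    have h1 := ea i; have h2 := eb i; have h3 := ec i; have h4 := es i
    simp only [Pi.add_apply] at *
    omega
  have ebc : ∀ i, (b + c) i = 0 ∨ (b + c) i = 1 := by
    intro i
    have h1 := ea i; have h2 := eb i; have h3 := ec i; have h4 := es i
    simp only [Pi.add_apply] at *
    omega
  have eca : ∀ i, (c + a) i = 0 ∨ (c + a) i = 1 := by
    intro i
    have h1 := ea i; have h2 := eb i; have h3 := ec i; have h4 := es i
    simp only [Pi.add_apply] at *
    omega
  have e2 : ∀ i, (b + c + a) i = 0 ∨ (b + c + a) i = 1 := by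
    rw [show b + c + a = a + b + c from by ring]; exact es
  have e3 : ∀ i, (c + a + b) i = 0 ∨ (c + a + b) i = 1 := by
    rw [show c + a + b = a + b + c from by ring]; exact es
  have hma : mask a ∈ SM := (mask_mem a ea).mp ha
  have hmb : mask b ∈ SM := (mask_mem b eb).mp hb
  have hmc : mask c ∈ SM := (mask_mem c ec).mp hc
  have hmsum : mask a + mask b + mask c ∈ SM := by
    have h1 : mask (a + b + c) = mask a + mask b + mask c := by
      rw [mask_add (a + b) c (entries_nonneg eab) nc, mask_add a b na nb]
    rw [← h1]
    exact (mask_mem _ es).mp hs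
  rw [X0_eval u v a b ea eb eab, X0_eval u v (a + b) c eab ec es,
    X0_eval u v b c eb ec ebc, X0_eval u v (b + c) a ebc ea e2,
    X0_eval u v c a ec ea eca, X0_eval u v (c + a) b eca eb e3,
    mask_add a b na nb, mask_add b c nb nc, mask_add c a nc na]
  exact key3 u v huv _ _ _ _ _ _ (masterJ _ hma _ hmb _ hmc hmsum)

lemma X0e_1 {𝕂 : Type*} [Field 𝕂] (u v : 𝕂) :
    X0 u v (wt 0) (wt 1) = 1 := by
  unfold X0
  rw [if_pos (by decide), show f3 (mask (wt 0)) (mask (wt 1)) =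
    ((1 : ℤ), (0 : ℤ), (0 : ℤ)) from by decide, ev_mk]
  push_cast
  ring

lemma X0e_2 {𝕂 : Type*} [Field 𝕂] (u v : 𝕂) :
    X0 u v (wt 1) (wt 0) = -(1) := by
  unfold X0
  rw [if_pos (by decide), show f3 (mask (wt 1)) (mask (wt 0)) =
    ((-1 : ℤ), (0 : ℤ), (0 : ℤ)) from by decide, ev_mk]
  push_cast
  ring

lemma X0e_3 {𝕂 : Type*} [Field 𝕂] (u v : 𝕂) :
    X0 u v (wt 0) (wt 2) = 1 := by
  unfold X0
  rw [if_pos (by decide), show f3 (mask (wt 0)) (mask (wt 2)) =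
    ((1 : ℤ), (0 : ℤ), (0 : ℤ)) from by decide, ev_mk]
  push_cast
  ring

lemma X0e_4 {𝕂 : Type*} [Field 𝕂] (u v : 𝕂) :
    X0 u v (wt 2) (wt 0) = -(1) := by
  unfold X0
  rw [if_pos (by decide), show f3 (mask (wt 2)) (mask (wt 0)) =
    ((-1 : ℤ), (0 : ℤ), (0 : ℤ)) from by decide, ev_mk]
  push_cast
  ring

lemma X0e_5 {𝕂 : Type*} [Field 𝕂] (u v : 𝕂) :
    X0 u v (wt 1) (wt 2) = 1 := by
  unfold X0
  rw [if_pos (by decide), show f3 (mask (wt 1)) (mask (wt 2)) =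
    ((1 : ℤ), (0 : ℤ), (0 : ℤ)) from by decide, ev_mk]
  push_cast
  ring

lemma X0e_6 {𝕂 : Type*} [Field 𝕂] (u v : 𝕂) :
    X0 u v (wt 2) (wt 1) = -(1) := by
  unfold X0
  rw [if_pos (by decide), show f3 (mask (wt 2)) (mask (wt 1)) =
    ((-1 : ℤ), (0 : ℤ), (0 : ℤ)) from by decide, ev_mk]
  push_cast
  ring

lemma X0e_7 {𝕂 : Type*} [Field 𝕂] (u v : 𝕂) :
    X0 u v (wt 1) (wt 3) = 1 := by
  unfold X0
  rw [if_pos (by decide), show f3 (mask (wt 1)) (mask (wt 3)) =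
    ((1 : ℤ), (0 : ℤ), (0 : ℤ)) from by decide, ev_mk]
  push_cast
  ring

lemma X0e_8 {𝕂 : Type*} [Field 𝕂] (u v : 𝕂) :
    X0 u v (wt 3) (wt 1) = -(1) := by
  unfold X0
  rw [if_pos (by decide), show f3 (mask (wt 3)) (mask (wt 1)) =
    ((-1 : ℤ), (0 : ℤ), (0 : ℤ)) from by decide, ev_mk]
  push_cast
  ring

lemma X0e_9 {𝕂 : Type*} [Field 𝕂] (u v : 𝕂) :
    X0 u v (wt 2) (wt 3) = 1 := by
  unfold X0
  rw [if_pos (by decide), show f3 (mask (wt 2)) (mask (wt 3)) =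
    ((1 : ℤ), (0 : ℤ), (0 : ℤ)) from by decide, ev_mk]
  push_cast
  ring

lemma X0e_10 {𝕂 : Type*} [Field 𝕂] (u v : 𝕂) :
    X0 u v (wt 3) (wt 2) = -(1) := by
  unfold X0
  rw [if_pos (by decide), show f3 (mask (wt 3)) (mask (wt 2)) =
    ((-1 : ℤ), (0 : ℤ), (0 : ℤ)) from by decide, ev_mk]
  push_cast
  ring

lemma X0e_11 {𝕂 : Type*} [Field 𝕂] (u v : 𝕂) :
    X0 u v (wt 3) (wt 0 + wt 2) = 1 := by
  unfold X0
  rw [if_pos (by decide), show f3 (mask (wt 3)) (mask (wt 0 + wt 2)) =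
    ((1 : ℤ), (0 : ℤ), (0 : ℤ)) from by decide, ev_mk]
  push_cast
  ring

lemma X0e_12 {𝕂 : Type*} [Field 𝕂] (u v : 𝕂) :
    X0 u v (wt 0 + wt 2) (wt 3) = -(1) := by
  unfold X0
  rw [if_pos (by decide), show f3 (mask (wt 0 + wt 2)) (mask (wt 3)) =
    ((-1 : ℤ), (0 : ℤ), (0 : ℤ)) from by decide, ev_mk]
  push_cast
  ring

lemma X0e_13 {𝕂 : Type*} [Field 𝕂] (u v : 𝕂) :
    X0 u v (wt 3) (wt 0 + wt 1) = 1 := by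
  unfold X0
  rw [if_pos (by decide), show f3 (mask (wt 3)) (mask (wt 0 + wt 1)) =
    ((1 : ℤ), (0 : ℤ), (0 : ℤ)) from by decide, ev_mk]
  push_cast
  ring

lemma X0e_14 {𝕂 : Type*} [Field 𝕂] (u v : 𝕂) :
    X0 u v (wt 0 + wt 1) (wt 3) = -(1) := by
  unfold X0
  rw [if_pos (by decide), show f3 (mask (wt 0 + wt 1)) (mask (wt 3)) =
    ((-1 : ℤ), (0 : ℤ), (0 : ℤ)) from by decide, ev_mk]
  push_cast
  ring

lemma X0e_15 {𝕂 : Type*} [Field 𝕂] (u v : 𝕂) :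
    X0 u v (wt 2) (wt 0 + wt 1) = 1 := by
  unfold X0
  rw [if_pos (by decide), show f3 (mask (wt 2)) (mask (wt 0 + wt 1)) =
    ((1 : ℤ), (0 : ℤ), (0 : ℤ)) from by decide, ev_mk]
  push_cast
  ring

lemma X0e_16 {𝕂 : Type*} [Field 𝕂] (u v : 𝕂) :
    X0 u v (wt 0 + wt 1) (wt 2) = -(1) := by
  unfold X0
  rw [if_pos (by decide), show f3 (mask (wt 0 + wt 1)) (mask (wt 2)) =
    ((-1 : ℤ), (0 : ℤ), (0 : ℤ)) from by decide, ev_mk]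
  push_cast
  ring

lemma X0e_17 {𝕂 : Type*} [Field 𝕂] (u v : 𝕂) :
    X0 u v (wt 1) (wt 0 + wt 2 + wt 3) = 1 := by
  unfold X0
  rw [if_pos (by decide), show f3 (mask (wt 1)) (mask (wt 0 + wt 2 + wt 3)) =
    ((1 : ℤ), (0 : ℤ), (0 : ℤ)) from by decide, ev_mk]
  push_cast
  ring

lemma X0e_18 {𝕂 : Type*} [Field 𝕂] (u v : 𝕂) :
    X0 u v (wt 0 + wt 2 + wt 3) (wt 1) = -(1) := by
  unfold X0
  rw [if_pos (by decide), show f3 (mask (wt 0 + wt 2 + wt 3)) (mask (wt 1)) =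
    ((-1 : ℤ), (0 : ℤ), (0 : ℤ)) from by decide, ev_mk]
  push_cast
  ring

lemma X0e_19 {𝕂 : Type*} [Field 𝕂] (u v : 𝕂) :
    X0 u v (wt 0) (wt 1 + wt 2) = u := by
  unfold X0
  rw [if_pos (by decide), show f3 (mask (wt 0)) (mask (wt 1 + wt 2)) =
    ((0 : ℤ), (1 : ℤ), (0 : ℤ)) from by decide, ev_mk]
  push_cast
  ring

lemma X0e_20 {𝕂 : Type*} [Field 𝕂] (u v : 𝕂) :
    X0 u v (wt 1 + wt 2) (wt 0) = -(u) := by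
  unfold X0
  rw [if_pos (by decide), show f3 (mask (wt 1 + wt 2)) (mask (wt 0)) =
    ((0 : ℤ), (-1 : ℤ), (0 : ℤ)) from by decide, ev_mk]
  push_cast
  ring

lemma X0e_21 {𝕂 : Type*} [Field 𝕂] (u v : 𝕂) :
    X0 u v (wt 1) (wt 0 + wt 2) = u + 1 := by
  unfold X0
  rw [if_pos (by decide), show f3 (mask (wt 1)) (mask (wt 0 + wt 2)) =
    ((1 : ℤ), (1 : ℤ), (0 : ℤ)) from by decide, ev_mk]
  push_cast
  ring

lemma X0e_22 {𝕂 : Type*} [Field 𝕂] (u v : 𝕂) :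
    X0 u v (wt 0 + wt 2) (wt 1) = -(u + 1) := by
  unfold X0
  rw [if_pos (by decide), show f3 (mask (wt 0 + wt 2)) (mask (wt 1)) =
    ((-1 : ℤ), (-1 : ℤ), (0 : ℤ)) from by decide, ev_mk]
  push_cast
  ring

lemma X0e_23 {𝕂 : Type*} [Field 𝕂] (u v : 𝕂) :
    X0 u v (wt 0) (wt 1 + wt 3) = -1 := by
  unfold X0
  rw [if_pos (by decide), show f3 (mask (wt 0)) (mask (wt 1 + wt 3)) =
    ((-1 : ℤ), (0 : ℤ), (0 : ℤ)) from by decide, ev_mk]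
  push_cast
  ring

lemma X0e_24 {𝕂 : Type*} [Field 𝕂] (u v : 𝕂) :
    X0 u v (wt 1 + wt 3) (wt 0) = -(-1) := by
  unfold X0
  rw [if_pos (by decide), show f3 (mask (wt 1 + wt 3)) (mask (wt 0)) =
    ((1 : ℤ), (0 : ℤ), (0 : ℤ)) from by decide, ev_mk]
  push_cast
  ring

lemma X0e_25 {𝕂 : Type*} [Field 𝕂] (u v : 𝕂) :
    X0 u v (wt 0) (wt 2 + wt 3) = -1 := by
  unfold X0
  rw [if_pos (by decide), show f3 (mask (wt 0)) (mask (wt 2 + wt 3)) =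
    ((-1 : ℤ), (0 : ℤ), (0 : ℤ)) from by decide, ev_mk]
  push_cast
  ring

lemma X0e_26 {𝕂 : Type*} [Field 𝕂] (u v : 𝕂) :
    X0 u v (wt 2 + wt 3) (wt 0) = -(-1) := by
  unfold X0
  rw [if_pos (by decide), show f3 (mask (wt 2 + wt 3)) (mask (wt 0)) =
    ((1 : ℤ), (0 : ℤ), (0 : ℤ)) from by decide, ev_mk]
  push_cast
  ring

lemma X0e_27 {𝕂 : Type*} [Field 𝕂] (u v : 𝕂) :
    X0 u v (wt 2) (wt 0 + wt 1 + wt 3) = v - 1 := by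
  unfold X0
  rw [if_pos (by decide), show f3 (mask (wt 2)) (mask (wt 0 + wt 1 + wt 3)) =
    ((-1 : ℤ), (0 : ℤ), (1 : ℤ)) from by decide, ev_mk]
  push_cast
  ring

lemma X0e_28 {𝕂 : Type*} [Field 𝕂] (u v : 𝕂) :
    X0 u v (wt 0 + wt 1 + wt 3) (wt 2) = -(v - 1) := by
  unfold X0
  rw [if_pos (by decide), show f3 (mask (wt 0 + wt 1 + wt 3)) (mask (wt 2)) =
    ((1 : ℤ), (0 : ℤ), (-1 : ℤ)) from by decide, ev_mk]
  push_cast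
  ring

lemma X0e_29 {𝕂 : Type*} [Field 𝕂] (u v : 𝕂) :
    X0 u v (wt 3) (wt 0 + wt 1 + wt 2) = v := by
  unfold X0
  rw [if_pos (by decide), show f3 (mask (wt 3)) (mask (wt 0 + wt 1 + wt 2)) =
    ((0 : ℤ), (0 : ℤ), (1 : ℤ)) from by decide, ev_mk]
  push_cast
  ring

lemma X0e_30 {𝕂 : Type*} [Field 𝕂] (u v : 𝕂) :
    X0 u v (wt 0 + wt 1 + wt 2) (wt 3) = -(v) := by
  unfold X0
  rw [if_pos (by decide), show f3 (mask (wt 0 + wt 1 + wt 2)) (mask (wt 3)) =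
    ((0 : ℤ), (0 : ℤ), (-1 : ℤ)) from by decide, ev_mk]
  push_cast
  ring

lemma X0e_31 {𝕂 : Type*} [Field 𝕂] (u v : 𝕂) :
    X0 u v (wt 0 + wt 1) (wt 2 + wt 3) = 1 := by
  unfold X0
  rw [if_pos (by decide), show f3 (mask (wt 0 + wt 1)) (mask (wt 2 + wt 3)) =
    ((1 : ℤ), (0 : ℤ), (0 : ℤ)) from by decide, ev_mk]
  push_cast
  ring

lemma X0e_32 {𝕂 : Type*} [Field 𝕂] (u v : 𝕂) :
    X0 u v (wt 2 + wt 3) (wt 0 + wt 1) = -(1) := by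
  unfold X0
  rw [if_pos (by decide), show f3 (mask (wt 2 + wt 3)) (mask (wt 0 + wt 1)) =
    ((-1 : ℤ), (0 : ℤ), (0 : ℤ)) from by decide, ev_mk]
  push_cast
  ring

lemma X0e_33 {𝕂 : Type*} [Field 𝕂] (u v : 𝕂) :
    X0 u v (wt 0 + wt 2) (wt 1 + wt 3) = v - 1 := by
  unfold X0
  rw [if_pos (by decide), show f3 (mask (wt 0 + wt 2)) (mask (wt 1 + wt 3)) =
    ((-1 : ℤ), (0 : ℤ), (1 : ℤ)) from by decide, ev_mk]
  push_cast
  ring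

lemma X0e_34 {𝕂 : Type*} [Field 𝕂] (u v : 𝕂) :
    X0 u v (wt 1 + wt 3) (wt 0 + wt 2) = -(v - 1) := by
  unfold X0
  rw [if_pos (by decide), show f3 (mask (wt 1 + wt 3)) (mask (wt 0 + wt 2)) =
    ((1 : ℤ), (0 : ℤ), (-1 : ℤ)) from by decide, ev_mk]
  push_cast
  ring

lemma X0_norm {𝕂 : Type*} [Field 𝕂] (u v : 𝕂) : ∀ p ∈ A4, X0 u v p.1 p.2 = 1 := by
  intro p hp
  simp only [A4, Set.mem_insert_iff, Set.mem_singleton_iff] at hp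
  rcases hp with rfl|rfl|rfl|rfl|rfl|rfl|rfl|rfl|rfl
  · exact X0e_1 u v
  · exact X0e_3 u v
  · exact X0e_5 u v
  · exact X0e_7 u v
  · exact X0e_9 u v
  · exact X0e_11 u v
  · exact X0e_13 u v
  · exact X0e_15 u v
  · exact X0e_17 u v

lemma X0_isSliceLaw {𝕂 : Type*} [Field 𝕂] (u v : 𝕂) (huv : u * v = 0) :
    IsSliceLaw (X0 u v) :=
  ⟨X0_zero u v, X0_anti u v, X0_jacobi u v huv, X0_norm u v⟩

lemma slice_unique {𝕂 : Type*} [Field 𝕂] (u v : 𝕂) (X : (Fin 4 → ℤ) → (Fin 4 → ℤ) → 𝕂)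
    (hX : IsSliceLaw X) (hu : X (wt 0) (wt 1 + wt 2) = u)
    (hv : X (wt 3) (wt 0 + wt 1 + wt 2) = v) : X = X0 u v := by
  obtain ⟨hzero, hanti, hjac, hnorm⟩ := hX
  -- normalizations
  have n1 : X (wt 0) (wt 1) = 1 := hnorm (wt 0, wt 1) (by simp [A4])
  have n2 : X (wt 0) (wt 2) = 1 := hnorm (wt 0, wt 2) (by simp [A4])
  have n3 : X (wt 1) (wt 2) = 1 := hnorm (wt 1, wt 2) (by simp [A4])
  have n4 : X (wt 1) (wt 3) = 1 := hnorm (wt 1, wt 3) (by simp [A4])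
  have n5 : X (wt 2) (wt 3) = 1 := hnorm (wt 2, wt 3) (by simp [A4])
  have n6 : X (wt 3) (wt 0 + wt 2) = 1 := hnorm (wt 3, wt 0 + wt 2) (by simp [A4])
  have n7 : X (wt 3) (wt 0 + wt 1) = 1 := hnorm (wt 3, wt 0 + wt 1) (by simp [A4])
  have n8 : X (wt 2) (wt 0 + wt 1) = 1 := hnorm (wt 2, wt 0 + wt 1) (by simp [A4])
  have n9 : X (wt 1) (wt 0 + wt 2 + wt 3) = 1 := hnorm (wt 1, wt 0 + wt 2 + wt 3) (by simp [A4])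
  have z30 : X (wt 3) (wt 0) = 0 := hzero _ _ (Or.inr (Or.inr (by decide)))
  -- J(0,1,2):  X(1,02) = u + 1
  have d1' : X (wt 0 + wt 2) (wt 1) = -(u + 1) := by
    have hJ := hjac (wt 0) (wt 1) (wt 2) (by decide) (by decide) (by decide) (by decide)
    have m1 : X (wt 0 + wt 1) (wt 2) = -1 := by rw [hanti, n8]; try norm_num
    have m2 : X (wt 1 + wt 2) (wt 0) = -u := by rw [hanti, hu]
    have m3 : X (wt 2) (wt 0) = -1 := by rw [hanti, n2]; try norm_num
    rw [show wt 2 + wt 0 = wt 0 + wt 2 from by ring] at hJ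
    rw [n1, m1, n3, m2, m3] at hJ
    linear_combination -hJ
  have d1 : X (wt 1) (wt 0 + wt 2) = u + 1 := by rw [hanti, d1']; ring
  -- J(0,1,3):  X(0,13) = -1
  have d2' : X (wt 1 + wt 3) (wt 0) = 1 := by
    have hJ := hjac (wt 0) (wt 1) (wt 3) (by decide) (by decide) (by decide) (by decide)
    have m1 : X (wt 0 + wt 1) (wt 3) = -1 := by rw [hanti, n7]; try norm_num
    rw [n1, m1, n4, z30] at hJ
    linear_combination hJ
  have d2 : X (wt 0) (wt 1 + wt 3) = -1 := by rw [hanti, d2']; try norm_num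
  -- J(0,2,3):  X(0,23) = -1
  have d3' : X (wt 2 + wt 3) (wt 0) = 1 := by
    have hJ := hjac (wt 0) (wt 2) (wt 3) (by decide) (by decide) (by decide) (by decide)
    have m1 : X (wt 0 + wt 2) (wt 3) = -1 := by rw [hanti, n6]; try norm_num
    rw [n2, m1, n5, z30] at hJ
    linear_combination hJ
  have d3 : X (wt 0) (wt 2 + wt 3) = -1 := by rw [hanti, d3']; try norm_num
  -- J(0,1,23): X(01,23) = 1
  have d5 : X (wt 0 + wt 1) (wt 2 + wt 3) = 1 := by
    have hJ := hjac (wt 0) (wt 1) (wt 2 + wt 3) (by decide) (by decide) (by decide) (by decide)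
    have z1 : X (wt 1) (wt 2 + wt 3) = 0 := hzero _ _ (Or.inr (Or.inr (by decide)))
    rw [show wt 2 + wt 3 + wt 0 = wt 0 + wt 2 + wt 3 from by ring] at hJ
    have m1 : X (wt 0 + wt 2 + wt 3) (wt 1) = -1 := by rw [hanti, n9]; try norm_num
    rw [n1, z1, d3', m1] at hJ
    linear_combination hJ
  -- J(0,12,3):  u * v = 0
  have huv0 : u * v = 0 := by
    have hJ := hjac (wt 0) (wt 1 + wt 2) (wt 3) (by decide) (by decide) (by decide) (by decide)
    have z1 : X (wt 1 + wt 2) (wt 3) = 0 := hzero _ _ (Or.inr (Or.inr (by decide)))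
    rw [show wt 0 + (wt 1 + wt 2) = wt 0 + wt 1 + wt 2 from by ring] at hJ
    have m1 : X (wt 0 + wt 1 + wt 2) (wt 3) = -v := by rw [hanti, hv]
    rw [hu, m1, z1, z30] at hJ
    linear_combination -hJ
  -- J(1,3,02):  X(02,13) = v - 1
  have d6 : X (wt 0 + wt 2) (wt 1 + wt 3) = v - 1 := by
    have hJ := hjac (wt 1) (wt 3) (wt 0 + wt 2) (by decide) (by decide) (by decide) (by decide)
    rw [show wt 3 + (wt 0 + wt 2) = wt 0 + wt 2 + wt 3 from by ring,
      show wt 0 + wt 2 + wt 1 = wt 0 + wt 1 + wt 2 from by ring] at hJ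
    have m1 : X (wt 0 + wt 2 + wt 3) (wt 1) = -1 := by rw [hanti, n9]; try norm_num
    have m2 : X (wt 0 + wt 1 + wt 2) (wt 3) = -v := by rw [hanti, hv]
    rw [n4, n6, m1, d1', m2] at hJ
    have d6' : X (wt 1 + wt 3) (wt 0 + wt 2) = -(v - 1) := by linear_combination hJ - huv0
    rw [hanti, d6']; ring
  -- J(0,2,13):  X(2,013) = v - 1
  have d4 : X (wt 2) (wt 0 + wt 1 + wt 3) = v - 1 := by
    have hJ := hjac (wt 0) (wt 2) (wt 1 + wt 3) (by decide) (by decide) (by decide) (by decide)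
    have z1 : X (wt 2) (wt 1 + wt 3) = 0 := hzero _ _ (Or.inr (Or.inr (by decide)))
    rw [show wt 1 + wt 3 + wt 0 = wt 0 + wt 1 + wt 3 from by ring] at hJ
    rw [n2, d6, z1, d2'] at hJ
    have d4' : X (wt 0 + wt 1 + wt 3) (wt 2) = -(v - 1) := by linear_combination hJ
    rw [hanti, d4']; ring
  -- flipped facts
  have g1 : X (wt 1) (wt 0) = -(1 : 𝕂) := by rw [hanti, n1]
  have g2 : X (wt 2) (wt 0) = -(1 : 𝕂) := by rw [hanti, n2]
  have g3 : X (wt 2) (wt 1) = -(1 : 𝕂) := by rw [hanti, n3]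
  have g4 : X (wt 3) (wt 1) = -(1 : 𝕂) := by rw [hanti, n4]
  have g5 : X (wt 3) (wt 2) = -(1 : 𝕂) := by rw [hanti, n5]
  have g6 : X (wt 0 + wt 2) (wt 3) = -(1 : 𝕂) := by rw [hanti, n6]
  have g7 : X (wt 0 + wt 1) (wt 3) = -(1 : 𝕂) := by rw [hanti, n7]
  have g8 : X (wt 0 + wt 1) (wt 2) = -(1 : 𝕂) := by rw [hanti, n8]
  have g9 : X (wt 0 + wt 2 + wt 3) (wt 1) = -(1 : 𝕂) := by rw [hanti, n9]
  have g10 : X (wt 1 + wt 2) (wt 0) = -u := by rw [hanti, hu]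
  have g11 : X (wt 0 + wt 1 + wt 2) (wt 3) = -v := by rw [hanti, hv]
  have g12 : X (wt 0 + wt 1 + wt 3) (wt 2) = -(v - 1) := by rw [hanti, d4]
  have g13 : X (wt 2 + wt 3) (wt 0 + wt 1) = -(1 : 𝕂) := by rw [hanti, d5]
  have g14 : X (wt 1 + wt 3) (wt 0 + wt 2) = -(v - 1) := by rw [hanti, d6]
  -- remaining flips: d1', d2', d3' already oriented
  funext a b
  by_cases hm : a ∈ piSet ∧ b ∈ piSet ∧ a + b ∈ piSet
  · obtain ⟨ha, hb, hab⟩ := hm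
    rcases pi_cases a ha with rfl|rfl|rfl|rfl|rfl|rfl|rfl|rfl|rfl|rfl|rfl|rfl|rfl <;>
      rcases pi_cases b hb with rfl|rfl|rfl|rfl|rfl|rfl|rfl|rfl|rfl|rfl|rfl|rfl|rfl <;>
      first
        | exact absurd hab (by decide)
        | (simp only [X0e_1, X0e_2, X0e_3, X0e_4, X0e_5, X0e_6, X0e_7, X0e_8, X0e_9, X0e_10, X0e_11, X0e_12, X0e_13, X0e_14, X0e_15, X0e_16, X0e_17, X0e_18, X0e_19, X0e_20, X0e_21, X0e_22, X0e_23, X0e_24, X0e_25, X0e_26, X0e_27, X0e_28, X0e_29, X0e_30, X0e_31, X0e_32, X0e_33, X0e_34, n1, n2, n3, n4, n5, n6, n7, n8, n9, hu, hv, d1, d1', d2, d2',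
             d3, d3', d4, d5, d6, g1, g2, g3, g4, g5, g6, g7, g8, g9, g10, g11, g12, g13, g14]
           try ring1)
  · rw [X0_zero u v a b (by tauto), hzero a b (by tauto)]

/-- The slice is isomorphic to `Spec 𝕂[u,v]/(uv)`: the remaining essential
parameters `u = X_{α₁,α₂+α₃}` and `v = X_{α₄,α₁+α₂+α₃}` satisfy `u·v = 0`, and every pair
`(u,v)` with `u·v = 0` arises from a unique point of the slice. -/
theorem slice_isomorphic_to_uv_zero
    {𝕂 : Type*} [Field 𝕂] [CharZero 𝕂] :
    (∀ X : (Fin 4 → ℤ) → (Fin 4 → ℤ) → 𝕂, IsSliceLaw X →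
        X (wt 0) (wt 1 + wt 2) * X (wt 3) (wt 0 + wt 1 + wt 2) = 0) ∧
    (∀ u v : 𝕂, u * v = 0 →
        ∃! X : (Fin 4 → ℤ) → (Fin 4 → ℤ) → 𝕂,
          IsSliceLaw X ∧ X (wt 0) (wt 1 + wt 2) = u ∧
            X (wt 3) (wt 0 + wt 1 + wt 2) = v) := by
  constructor
  · intro X hX
    obtain ⟨hzero, hanti, hjac, hnorm⟩ := hX
    have hJ := hjac (wt 0) (wt 1 + wt 2) (wt 3) (by decide) (by decide) (by decide) (by decide)
    have z1 : X (wt 1 + wt 2) (wt 3) = 0 := hzero _ _ (Or.inr (Or.inr (by decide)))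
    have z2 : X (wt 3) (wt 0) = 0 := hzero _ _ (Or.inr (Or.inr (by decide)))
    rw [show wt 0 + (wt 1 + wt 2) = wt 0 + wt 1 + wt 2 from by ring] at hJ
    have m1 : X (wt 0 + wt 1 + wt 2) (wt 3) = - X (wt 3) (wt 0 + wt 1 + wt 2) := hanti _ _
    rw [m1, z1, z2] at hJ
    linear_combination -hJ
  · intro u v huv
    refine ⟨X0 u v, ⟨X0_isSliceLaw u v huv, X0e_19 u v, X0e_29 u v⟩, ?_⟩
    rintro Y ⟨hY, hYu, hYv⟩
    exact slice_unique u v Y hY hYu hYv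
end
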